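/- Let A be a unital associative ℂ-algebra and ∂ a derivation of A. Define Y(a,x)b = (e^{x∂}a)b := Σ_{n≥0} (∂ⁿa)b xⁿ/n!. Then Y(1,x)b = b, Y(a,x)1 ∈ A[[x]] with constant term a, and the weak associativity Y(a,x+y)Y(b,y)c = Y(Y(a,x)b,y)c holds (as identities in A[[x,y]]). -/

import Mathlib

noncomputable section

private lemma leib {A : Type*} [Ring A] [Algebra ℂ A]
    (D : A →ₗ[ℂ] A) (hD : ∀ a b : A, D (a * b) = D a * b + a * D b)
    (u v : A) : ∀ m : ℕ,
    (D ^ m) (u * v) = ∑ i ∈ Finset.range (m + 1),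
      (m.choose i) • ((D ^ i) u * (D ^ (m - i)) v) := by
  intro m
  induction m with
  | zero => simp
  | succ m ih =>
    rw [pow_succ', Module.End.mul_apply, ih, map_sum]
    have h1 : ∀ i, D ((m.choose i) • ((D ^ i) u * (D ^ (m - i)) v)) =
        (m.choose i) • ((D ^ (i+1)) u * (D ^ (m - i)) v)
        + (m.choose i) • ((D ^ i) u * (D ^ (m - i + 1)) v) := by
      intro i
      rw [map_nsmul, hD, smul_add, pow_succ', pow_succ']
      rfl
    rw [Finset.sum_congr rfl fun i _ => h1 i, Finset.sum_add_distrib]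
    set F : ℕ → A := fun j => (D ^ j) u * (D ^ (m + 1 - j)) v with hF
    have hS1 : (∑ i ∈ Finset.range (m+1), (m.choose i) • ((D ^ (i+1)) u * (D ^ (m - i)) v))
        = ∑ i ∈ Finset.range (m+1), (m.choose i) • F (i+1) := by
      refine Finset.sum_congr rfl fun i _ => ?_
      simp [hF, Nat.succ_sub_succ]
    have hS2 : (∑ i ∈ Finset.range (m+1), (m.choose i) • ((D ^ i) u * (D ^ (m - i + 1)) v))
        = ∑ i ∈ Finset.range (m+1), (m.choose i) • F i := by
      refine Finset.sum_congr rfl fun i hi => ?_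
      rw [Finset.mem_range] at hi
      have : m - i + 1 = m + 1 - i := by omega
      simp [hF, this]
    rw [hS1, hS2]
    have hT : (∑ i ∈ Finset.range (m+2), ((m+1).choose i) • ((D ^ i) u * (D ^ (m + 1 - i)) v))
        = ∑ i ∈ Finset.range (m+1), ((m+1).choose (i+1)) • F (i+1) + F 0 := by
      rw [Finset.sum_range_succ']
      simp [hF]
    rw [hT]
    have hsplit : ∀ i, ((m+1).choose (i+1)) • F (i+1)
        = (m.choose i) • F (i+1) + (m.choose (i+1)) • F (i+1) := by
      intro i; rw [Nat.choose_succ_succ, add_smul]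
    rw [Finset.sum_congr rfl fun i _ => hsplit i, Finset.sum_add_distrib]
    have hS2' : (∑ i ∈ Finset.range (m+1), (m.choose (i+1)) • F (i+1)) + F 0
        = ∑ i ∈ Finset.range (m+1), (m.choose i) • F i := by
      rw [Finset.sum_range_succ' (fun i => (m.choose i) • F i) m]
      simp [Nat.choose_zero_right]
      rw [Finset.sum_range_succ]
      simp [Nat.choose_succ_self]
    rw [add_assoc, hS2']

/-- Let `A` be a unital associative `ℂ`-algebra and `D` a derivation of `A`.
Define `Y(a,x)b = (e^{xD}a)b = ∑_{n≥0} (Dⁿa)b xⁿ/n!`.  Then: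
(1) `Y(1,x)b = b`;
(2) `Y(a,x)1 ∈ A[[x]]` has constant term `a`;
(3) the weak associativity `Y(a,x+y)Y(b,y)c = Y(Y(a,x)b,y)c` holds in `A[[x,y]]`, i.e.
coefficientwise (after clearing the factorials `n! m!`):
`∑_{i=0}^{m} C(m,i) D^{n+i}a · (D^{m-i}b · c) = D^m(Dⁿa · b) · c`. -/
theorem stmt2 (A : Type*) [Ring A] [Algebra ℂ A]
    (D : A →ₗ[ℂ] A) (hD : ∀ a b : A, D (a * b) = D a * b + a * D b) :
    (∀ b : A,
      (PowerSeries.mk fun n => ((n.factorial : ℂ)⁻¹) • ((D ^ n) (1 : A) * b)) =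
        PowerSeries.C (R := A) b) ∧
    (∀ a : A,
      (PowerSeries.coeff (R := A) 0)
        (PowerSeries.mk fun n => ((n.factorial : ℂ)⁻¹) • ((D ^ n) a * 1)) = a) ∧
    (∀ a b c : A, ∀ n m : ℕ,
      (∑ i ∈ Finset.range (m + 1),
        (m.choose i : ℤ) • ((D ^ (n + i)) a * ((D ^ (m - i)) b * c))) =
      (D ^ m) ((D ^ n) a * b) * c) := by
  have hD1 : D 1 = 0 := by
    have h := hD 1 1
    rw [mul_one, one_mul, mul_one, left_eq_add] at h
    exact h
  have hDn1 : ∀ n : ℕ, 0 < n → (D ^ n) (1 : A) = 0 := by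
    rintro (_ | k) hn
    · omega
    · rw [pow_succ, Module.End.mul_apply, hD1, map_zero]
  refine ⟨?_, ?_, ?_⟩
  · intro b
    ext n
    rcases Nat.eq_zero_or_pos n with hn | hn
    · subst hn; simp
    · rw [PowerSeries.coeff_mk, PowerSeries.coeff_C, if_neg (by omega), hDn1 n hn]
      simp
  · intro a
    simp
  · intro a b c n m
    rw [leib D hD ((D ^ n) a) b m, Finset.sum_mul]
    refine Finset.sum_congr rfl fun i hi => ?_
    rw [smul_mul_assoc, natCast_zsmul]
    have h : (D ^ (n + i)) a = (D ^ i) ((D ^ n) a) := by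
      rw [add_comm, pow_add, Module.End.mul_apply]
    rw [h, mul_assoc]
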